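/- arXiv:2201.05733 — 3 statements merged into one kernel-verified Lean document; each statement's English description precedes it below -/
import Mathlib

section
/- For any n ≥ 4, any k with 4 ≤ k ≤ n, and any i with 2 ≤ i ≤ k-2, the product (r_k r_{k-i} r_{k-1} r_i)^2 equals the identity permutation of {1,...,n}. -/
/-- The prefix-reversal `r_m` on `{1, ..., n}` (encoded as `Fin n`, 0-indexed):
the 1-indexed entry `j` with `j ≤ m` is sent to `m + 1 - j`, and entries `j > m`
are fixed.  If `m > n` it is the identity. -/
def pancakeRev (n m : ℕ) : Equiv.Perm (Fin n) :=
  Function.Involutive.toPerm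
    (fun a => if h : a.val < m ∧ m ≤ n then ⟨m - 1 - a.val, by omega⟩ else a)
    (by
      intro a
      beta_reduce
      by_cases h : a.val < m ∧ m ≤ n
      · rw [dif_pos h]
        have h2 : m - 1 - a.val < m ∧ m ≤ n := by omega
        rw [dif_pos h2]
        apply Fin.ext
        simp
        omega
      · rw [dif_neg h, dif_neg h])

lemma pancakeRev_val (n m : ℕ) (a : Fin n) :
    ((pancakeRev n m a : Fin n) : ℕ) = if a.val < m ∧ m ≤ n then m - 1 - a.val else a.val := by
  simp only [pancakeRev, Function.Involutive.toPerm, Equiv.coe_fn_mk]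
  split_ifs with h
  · rfl
  · rfl

lemma pancakeRev_spec (n m : ℕ) (a : Fin n) :
    ((pancakeRev n m a : Fin n) : ℕ) = m - 1 - a.val ∧ a.val < m ∧ m ≤ n ∨
      ((pancakeRev n m a : Fin n) : ℕ) = a.val ∧ ¬(a.val < m ∧ m ≤ n) := by
  rw [pancakeRev_val]
  split_ifs with h
  · exact Or.inl ⟨rfl, h⟩
  · exact Or.inr ⟨rfl, h⟩

theorem pancake_C8_3 (n i k : ℕ) (hn : 4 ≤ n) (hk : 4 ≤ k) (hkn : k ≤ n)
    (hi : 2 ≤ i) (hik : i ≤ k - 2) :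
    (pancakeRev n k * pancakeRev n (k - i) * pancakeRev n (k - 1) * pancakeRev n i) ^ 2 =
      1 := by
  ext a
  simp only [pow_two, Equiv.Perm.mul_apply, Equiv.Perm.one_apply]
  have ha := a.isLt
  set b1 := pancakeRev n i a with hb1
  set b2 := pancakeRev n (k - 1) b1 with hb2
  set b3 := pancakeRev n (k - i) b2 with hb3
  set b4 := pancakeRev n k b3 with hb4
  set b5 := pancakeRev n i b4 with hb5
  set b6 := pancakeRev n (k - 1) b5 with hb6
  set b7 := pancakeRev n (k - i) b6 with hb7
  set b8 := pancakeRev n k b7 with hb8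
  have s1 := pancakeRev_spec n i a
  have s2 := pancakeRev_spec n (k - 1) b1
  have s3 := pancakeRev_spec n (k - i) b2
  have s4 := pancakeRev_spec n k b3
  have s5 := pancakeRev_spec n i b4
  have s6 := pancakeRev_spec n (k - 1) b5
  have s7 := pancakeRev_spec n (k - i) b6
  have s8 := pancakeRev_spec n k b7
  rw [← hb1] at s1
  rw [← hb2] at s2
  rw [← hb3] at s3
  rw [← hb4] at s4
  rw [← hb5] at s5
  rw [← hb6] at s6
  rw [← hb7] at s7
  rw [← hb8] at s8
  omega
end

section
/- For any n ≥ 5, any k with 5 ≤ k ≤ n, and any i with 3 ≤ i ≤ k-2, the product r_k r_{k-i+1} r_k r_i r_k r_{k-i} r_{k-1} r_{i-1} equals the identity permutation of {1,...,n}. -/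
lemma pancakeRev_apply_val (n m : ℕ) (a : Fin n) :
    ((pancakeRev n m) a).val = if a.val < m ∧ m ≤ n then m - 1 - a.val else a.val := by
  simp only [pancakeRev, Function.Involutive.coe_toPerm]
  show (if h : a.val < m ∧ m ≤ n then (⟨m - 1 - a.val, by omega⟩ : Fin n) else a).val = _
  split_ifs with h <;> simp

lemma pancake_key (n i k x0 x1 x2 x3 x4 x5 x6 x7 x8 : ℕ)
    (hk : 5 ≤ k) (hkn : k ≤ n) (hi : 3 ≤ i) (hik : i ≤ k - 2) (hx : x0 < n)
    (h1 : x1 = if x0 < (i - 1) ∧ (i - 1) ≤ n then (i - 1) - 1 - x0 else x0)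
    (h2 : x2 = if x1 < (k - 1) ∧ (k - 1) ≤ n then (k - 1) - 1 - x1 else x1)
    (h3 : x3 = if x2 < (k - i) ∧ (k - i) ≤ n then (k - i) - 1 - x2 else x2)
    (h4 : x4 = if x3 < k ∧ k ≤ n then k - 1 - x3 else x3)
    (h5 : x5 = if x4 < i ∧ i ≤ n then i - 1 - x4 else x4)
    (h6 : x6 = if x5 < k ∧ k ≤ n then k - 1 - x5 else x5)
    (h7 : x7 = if x6 < (k - i + 1) ∧ (k - i + 1) ≤ n then (k - i + 1) - 1 - x6 else x6)
    (h8 : x8 = if x7 < k ∧ k ≤ n then k - 1 - x7 else x7) : x8 = x0 := by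
  rcases Nat.lt_or_ge x0 (i - 1) with hA | hA
  · rw [if_pos (by omega)] at h1
    rw [if_pos (by omega)] at h2
    rw [if_neg (by omega)] at h3
    rw [if_pos (by omega)] at h4
    rw [if_pos (by omega)] at h5
    rw [if_pos (by omega)] at h6
    rw [if_neg (by omega)] at h7
    rw [if_pos (by omega)] at h8
    omega
  rcases Nat.lt_or_ge x0 (k - 1) with hB | hB
  · rw [if_neg (by omega)] at h1
    rw [if_pos (by omega)] at h2
    rw [if_pos (by omega)] at h3
    rw [if_pos (by omega)] at h4
    rw [if_neg (by omega)] at h5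
    rw [if_pos (by omega)] at h6
    rw [if_pos (by omega)] at h7
    rw [if_pos (by omega)] at h8
    omega
  rcases Nat.lt_or_ge x0 k with hD | hD
  · rw [if_neg (by omega)] at h1
    rw [if_neg (by omega)] at h2
    rw [if_neg (by omega)] at h3
    rw [if_pos (by omega)] at h4
    rw [if_pos (by omega)] at h5
    rw [if_pos (by omega)] at h6
    rw [if_pos (by omega)] at h7
    rw [if_pos (by omega)] at h8
    omega
  · rw [if_neg (by omega)] at h1
    rw [if_neg (by omega)] at h2
    rw [if_neg (by omega)] at h3
    rw [if_neg (by omega)] at h4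
    rw [if_neg (by omega)] at h5
    rw [if_neg (by omega)] at h6
    rw [if_neg (by omega)] at h7
    rw [if_neg (by omega)] at h8
    omega

theorem pancake_C8_4 (n i k : ℕ) (hn : 5 ≤ n) (hk : 5 ≤ k) (hkn : k ≤ n)
    (hi : 3 ≤ i) (hik : i ≤ k - 2) :
    pancakeRev n k * pancakeRev n (k - i + 1) * pancakeRev n k * pancakeRev n i *
      pancakeRev n k * pancakeRev n (k - i) * pancakeRev n (k - 1) * pancakeRev n (i - 1) =
      1 := by
  ext a
  have v := a.isLt
  simp only [Equiv.Perm.mul_apply, Equiv.Perm.one_apply]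
  show (_ : Fin n).val = a.val
  have h1 := pancakeRev_apply_val n (i - 1) a
  set a1 := pancakeRev n (i - 1) a with ha1
  have h2 := pancakeRev_apply_val n (k - 1) a1
  set a2 := pancakeRev n (k - 1) a1 with ha2
  have h3 := pancakeRev_apply_val n (k - i) a2
  set a3 := pancakeRev n (k - i) a2 with ha3
  have h4 := pancakeRev_apply_val n k a3
  set a4 := pancakeRev n k a3 with ha4
  have h5 := pancakeRev_apply_val n i a4
  set a5 := pancakeRev n i a4 with ha5
  have h6 := pancakeRev_apply_val n k a5
  set a6 := pancakeRev n k a5 with ha6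
  have h7 := pancakeRev_apply_val n (k - i + 1) a6
  set a7 := pancakeRev n (k - i + 1) a6 with ha7
  have h8 := pancakeRev_apply_val n k a7
  set a8 := pancakeRev n k a7 with ha8
  clear_value a1 a2 a3 a4 a5 a6 a7 a8
  exact pancake_key n i k a.val a1.val a2.val a3.val a4.val a5.val a6.val a7.val a8.val
    hk hkn hi hik v h1 h2 h3 h4 h5 h6 h7 h8
end

section
/- For any n ≥ 3, no product r_{i_0} r_{i_1} r_{i_2} of three prefix-reversals with i_0 ≠ i_1, i_1 ≠ i_2, i_2 ≠ i_0 and each 2 ≤ i_j ≤ n equals the identity permutation; i.e., the Pancake graph P_n contains no triangles. -/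
def pf (m x : ℕ) : ℕ := if x < m then m - 1 - x else x

lemma pancakeRev_val_s16 (n m : ℕ) (hmn : m ≤ n) (x : Fin n) :
    (pancakeRev n m x).val = pf m x.val := by
  show (dite _ _ _ : Fin n).val = _
  unfold pf
  split_ifs with h1 h2 h2 <;> simp_all

lemma pancakeRev_sq (n m : ℕ) (hmn : m ≤ n) : pancakeRev n m * pancakeRev n m = 1 := by
  ext x
  rw [Equiv.Perm.mul_apply, pancakeRev_val_s16 n m hmn, pancakeRev_val_s16 n m hmn]
  unfold pf
  have := x.isLt
  split_ifs <;> simp <;> omega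

lemma pancakeRev_inv (n m : ℕ) (hmn : m ≤ n) : (pancakeRev n m)⁻¹ = pancakeRev n m :=
  inv_eq_of_mul_eq_one_right (pancakeRev_sq n m hmn)

lemma key (n a b c : ℕ) (hn : 3 ≤ n) (ha : 2 ≤ a) (han : a ≤ n)
    (hb : 2 ≤ b) (hbn : b ≤ n) (hc : 2 ≤ c) (hcn : c ≤ n)
    (hbc : b ≠ c) (hca : c ≠ a)
    (h : pancakeRev n a * pancakeRev n b * pancakeRev n c = 1) : c < b := by
  have h0 : ((pancakeRev n a * pancakeRev n b * pancakeRev n c) ⟨0, by omega⟩).val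
      = (⟨0, by omega⟩ : Fin n).val := by rw [h]; rfl
  simp only [Equiv.Perm.mul_apply, pancakeRev_val_s16 n a han, pancakeRev_val_s16 n b hbn,
    pancakeRev_val_s16 n c hcn] at h0
  unfold pf at h0
  split_ifs at h0 <;> omega

theorem pancake_no_triangles (n i₀ i₁ i₂ : ℕ) (hn : 3 ≤ n)
    (h₀ : 2 ≤ i₀) (h₀n : i₀ ≤ n) (h₁ : 2 ≤ i₁) (h₁n : i₁ ≤ n) (h₂ : 2 ≤ i₂) (h₂n : i₂ ≤ n)
    (h01 : i₀ ≠ i₁) (h12 : i₁ ≠ i₂) (h20 : i₂ ≠ i₀) :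
    pancakeRev n i₀ * pancakeRev n i₁ * pancakeRev n i₂ ≠ 1 := by
  intro h
  -- r₀ * r₁ = r₂ and r₁ * r₂ = r₀
  have e01 : pancakeRev n i₀ * pancakeRev n i₁ = pancakeRev n i₂ := by
    have := mul_eq_one_iff_eq_inv.mp h
    rwa [pancakeRev_inv n i₂ h₂n] at this
  have e12 : pancakeRev n i₁ * pancakeRev n i₂ = pancakeRev n i₀ := by
    rw [mul_assoc] at h
    have := mul_eq_one_iff_inv_eq.mp h
    rw [pancakeRev_inv n i₀ h₀n] at this
    exact this.symm
  have hA : pancakeRev n i₁ * pancakeRev n i₂ * pancakeRev n i₀ = 1 := by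
    rw [e12]; exact pancakeRev_sq n i₀ h₀n
  have hB : pancakeRev n i₂ * pancakeRev n i₀ * pancakeRev n i₁ = 1 := by
    rw [mul_assoc, e01]; exact pancakeRev_sq n i₂ h₂n
  have l1 := key n i₀ i₁ i₂ hn h₀ h₀n h₁ h₁n h₂ h₂n h12 h20 h
  have l2 := key n i₁ i₂ i₀ hn h₁ h₁n h₂ h₂n h₀ h₀n h20 h01 hA
  have l3 := key n i₂ i₀ i₁ hn h₂ h₂n h₀ h₀n h₁ h₁n h01 h12 hB
  omega
end
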